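/- Let p ∈ [1,∞), γ < p−1, and let X be a Banach space. If u : (0,∞) → X is continuously differentiable with ∫₀^∞ ‖u(t)‖_X^p t^γ dt < ∞ and ∫₀^∞ ‖u'(t)‖_X^p t^γ dt < ∞, then the limit lim_{t→0⁺} u(t) exists in X; in particular u extends to a continuous function on [0,∞). -/

import Mathlib

open MeasureTheory ENNReal Set Topology Filter

/-- **Sobolev embedding `W^{1,p}(ℝ_+, w_γ; X) ↪ C([0,∞); X)` for `γ < p-1`**
(Lemma 3.1 of \[LV18\]): a continuously differentiable function on `(0,∞)` with finite
weighted norms has a limit at `0⁺`, hence extends continuously to `[0,∞)`. -/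
theorem trace_existence_halfline (p γ : ℝ) (hp : 1 ≤ p) (hγ : γ < p - 1)
    (X : Type*) [NormedAddCommGroup X] [NormedSpace ℝ X] [CompleteSpace X]
    (u u' : ℝ → X)
    (hc : ContinuousOn u' (Ioi (0:ℝ)))
    (hder : ∀ t ∈ Ioi (0:ℝ), HasDerivAt u (u' t) t)
    (hu : (∫⁻ t in Ioi (0:ℝ), (‖u t‖₊ : ℝ≥0∞) ^ p * ENNReal.ofReal (t ^ γ)) ≠ ⊤)
    (hu' : (∫⁻ t in Ioi (0:ℝ), (‖u' t‖₊ : ℝ≥0∞) ^ p * ENNReal.ofReal (t ^ γ)) ≠ ⊤) :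
    (∃ x₀ : X, Tendsto u (𝓝[>] (0:ℝ)) (𝓝 x₀)) ∧
    (∃ v : ℝ → X, ContinuousOn v (Ici (0:ℝ)) ∧ ∀ t ∈ Ioi (0:ℝ), v t = u t) := by
  have hp0 : (0:ℝ) < p := lt_of_lt_of_le one_pos hp
  have hsm : AEStronglyMeasurable u' (volume.restrict (Ioc (0:ℝ) 1)) :=
    (hc.aestronglyMeasurable measurableSet_Ioi).mono_measure
      (Measure.restrict_mono Ioc_subset_Ioi_self le_rfl)
  have hA_ne : (∫⁻ r in Ioc (0:ℝ) 1, (‖u' r‖₊ : ℝ≥0∞) ^ p * ENNReal.ofReal (r ^ γ)) ≠ ⊤ := by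
    refine ne_top_of_le_ne_top hu' ?_
    exact lintegral_mono' (Measure.restrict_mono Ioc_subset_Ioi_self le_rfl) le_rfl
  -- the key integrability statement
  have hfin : (∫⁻ r in Ioc (0:ℝ) 1, (‖u' r‖₊ : ℝ≥0∞)) < ⊤ := by
    rcases eq_or_lt_of_le hp with hp1 | hp1
    · -- p = 1
      have hγ0 : γ ≤ 0 := by nlinarith [hγ, hp1]
      have hb : ∀ᵐ r ∂(volume.restrict (Ioc (0:ℝ) 1)),
          (‖u' r‖₊ : ℝ≥0∞) ≤ (‖u' r‖₊ : ℝ≥0∞) ^ p * ENNReal.ofReal (r ^ γ) := by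
        filter_upwards [self_mem_ae_restrict measurableSet_Ioc] with r hr
        have hr0 : (0:ℝ) < r := hr.1
        have h1 : (1:ℝ) ≤ r ^ γ := by
          have := Real.rpow_le_rpow_of_exponent_ge hr0 hr.2 hγ0
          rwa [Real.rpow_zero] at this
        calc (‖u' r‖₊ : ℝ≥0∞) = (‖u' r‖₊ : ℝ≥0∞) ^ p * 1 := by
              rw [← hp1]; simp
          _ ≤ (‖u' r‖₊ : ℝ≥0∞) ^ p * ENNReal.ofReal (r ^ γ) := by
              gcongr
              exact ENNReal.one_le_ofReal.2 h1
      exact lt_of_le_of_lt (lintegral_mono_ae hb) hA_ne.lt_top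
    · -- p > 1 : Hölder
      set q : ℝ := Real.conjExponent p with hq
      have hpq : p.HolderConjugate q := Real.HolderConjugate.conjExponent hp1
      set f : ℝ → ℝ≥0∞ := fun r => (‖u' r‖₊ : ℝ≥0∞) * ENNReal.ofReal (r ^ (γ / p)) with hf
      set g : ℝ → ℝ≥0∞ := fun r => ENNReal.ofReal (r ^ (-(γ / p))) with hg
      have hrc : ∀ s : ℝ, ContinuousOn (fun r : ℝ => r ^ s) (Ioi (0:ℝ)) := fun s x hx =>
        (Real.continuousAt_rpow_const x s (Or.inl (ne_of_gt hx))).continuousWithinAt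
      have hfm : AEMeasurable f (volume.restrict (Ioc (0:ℝ) 1)) := by
        refine hsm.enorm.mul ?_
        exact (ENNReal.measurable_ofReal.comp_aemeasurable
          (((hrc (γ / p)).aemeasurable measurableSet_Ioi).mono_measure
            (Measure.restrict_mono Ioc_subset_Ioi_self le_rfl)))
      have hgm : AEMeasurable g (volume.restrict (Ioc (0:ℝ) 1)) :=
        (ENNReal.measurable_ofReal.comp_aemeasurable
          (((hrc (-(γ / p))).aemeasurable measurableSet_Ioi).mono_measure
            (Measure.restrict_mono Ioc_subset_Ioi_self le_rfl)))
      have Hold := ENNReal.lintegral_mul_le_Lp_mul_Lq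
        (volume.restrict (Ioc (0:ℝ) 1)) hpq hfm hgm
      -- identify the left side
      have hLHS : (∫⁻ r in Ioc (0:ℝ) 1, (‖u' r‖₊ : ℝ≥0∞))
          = ∫⁻ r in Ioc (0:ℝ) 1, (f * g) r := by
        refine lintegral_congr_ae ?_
        filter_upwards [self_mem_ae_restrict measurableSet_Ioc] with r hr
        have hr0 : (0:ℝ) < r := hr.1
        simp only [hf, hg, Pi.mul_apply]
        rw [mul_assoc, ← ENNReal.ofReal_mul (Real.rpow_nonneg hr0.le _),
          ← Real.rpow_add hr0, add_neg_cancel, Real.rpow_zero, ENNReal.ofReal_one, mul_one]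
      -- first factor
      have hFp : (∫⁻ r in Ioc (0:ℝ) 1, f r ^ p)
          = ∫⁻ r in Ioc (0:ℝ) 1, (‖u' r‖₊ : ℝ≥0∞) ^ p * ENNReal.ofReal (r ^ γ) := by
        refine lintegral_congr_ae ?_
        filter_upwards [self_mem_ae_restrict measurableSet_Ioc] with r hr
        have hr0 : (0:ℝ) < r := hr.1
        simp only [hf]
        rw [ENNReal.mul_rpow_of_nonneg _ _ hp0.le,
          ENNReal.ofReal_rpow_of_pos (Real.rpow_pos_of_pos hr0 _),
          ← Real.rpow_mul hr0.le, div_mul_cancel₀ γ hp0.ne']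
      -- second factor
      have hs : (-1:ℝ) < -(γ / p) * q := by
        have hq_eq : q = p / (p - 1) := rfl
        have hp1' : (0:ℝ) < p - 1 := by linarith
        have : -(γ / p) * q = -γ / (p - 1) := by
          rw [hq_eq]; field_simp
        rw [this, lt_div_iff₀ hp1']
        linarith
      have hint : IntegrableOn (fun r : ℝ => r ^ (-(γ / p) * q)) (Ioc (0:ℝ) 1) := by
        have := intervalIntegral.intervalIntegrable_rpow' (a := 0) (b := 1) hs
        rwa [intervalIntegrable_iff_integrableOn_Ioc_of_le zero_le_one] at this
      have hGq : (∫⁻ r in Ioc (0:ℝ) 1, g r ^ q) < ⊤ := by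
        have hle : (∫⁻ r in Ioc (0:ℝ) 1, g r ^ q)
            ≤ ∫⁻ r in Ioc (0:ℝ) 1, (‖(r : ℝ) ^ (-(γ / p) * q)‖₊ : ℝ≥0∞) := by
          refine lintegral_mono_ae ?_
          filter_upwards [self_mem_ae_restrict measurableSet_Ioc] with r hr
          have hr0 : (0:ℝ) < r := hr.1
          simp only [hg]
          rw [ENNReal.ofReal_rpow_of_pos (Real.rpow_pos_of_pos hr0 _),
            ← Real.rpow_mul hr0.le]
          exact Real.ofReal_le_enorm _
        exact lt_of_le_of_lt hle hint.2
      have hFp_lt : (∫⁻ r in Ioc (0:ℝ) 1, f r ^ p) < ⊤ := by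
        rw [hFp]; exact hA_ne.lt_top
      calc (∫⁻ r in Ioc (0:ℝ) 1, (‖u' r‖₊ : ℝ≥0∞))
          = ∫⁻ r in Ioc (0:ℝ) 1, (f * g) r := hLHS
        _ ≤ (∫⁻ r in Ioc (0:ℝ) 1, f r ^ p) ^ (1 / p)
            * (∫⁻ r in Ioc (0:ℝ) 1, g r ^ q) ^ (1 / q) := Hold
        _ < ⊤ := ENNReal.mul_lt_top
            (ENNReal.rpow_lt_top_of_nonneg hpq.one_div_nonneg hFp_lt.ne)
            (ENNReal.rpow_lt_top_of_nonneg hpq.symm.one_div_nonneg hGq.ne)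
  have hInt : IntegrableOn u' (Ioc (0:ℝ) 1) := ⟨hsm, hfin⟩
  have hIcc : IntegrableOn u' (Icc (0:ℝ) 1) := by
    rwa [integrableOn_Icc_iff_integrableOn_Ioc]
  set F : ℝ → X := fun x => ∫ r in Ioc (0:ℝ) x, u' r with hFdef
  have hFcont : ContinuousOn F (Icc (0:ℝ) 1) := intervalIntegral.continuousOn_primitive hIcc
  set x₀ : X := u 1 - ∫ r in Ioc (0:ℝ) 1, u' r with hx₀
  have key : ∀ t ∈ Ioo (0:ℝ) 1, u t = x₀ + F t := by
    intro t ht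
    have hii : IntervalIntegrable u' volume t 1 := by
      rw [intervalIntegrable_iff_integrableOn_Ioc_of_le ht.2.le]
      exact hInt.mono_set (Ioc_subset_Ioc_left ht.1.le)
    have hsub : ∀ x ∈ uIcc t 1, HasDerivAt u (u' x) x := by
      intro x hx
      rw [uIcc_of_le ht.2.le] at hx
      exact hder x (lt_of_lt_of_le ht.1 hx.1)
    have h1 : ∫ r in t..1, u' r = u 1 - u t :=
      intervalIntegral.integral_eq_sub_of_hasDerivAt hsub hii
    rw [intervalIntegral.integral_of_le ht.2.le] at h1
    have h3 : (∫ r in Ioc (0:ℝ) 1, u' r) = F t + ∫ r in Ioc t 1, u' r := by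
      rw [hFdef]
      rw [← setIntegral_union (Ioc_disjoint_Ioc_of_le le_rfl) measurableSet_Ioc
          (hInt.mono_set (Ioc_subset_Ioc_right ht.2.le))
          (hInt.mono_set (Ioc_subset_Ioc_left ht.1.le)),
        Ioc_union_Ioc_eq_Ioc ht.1.le ht.2.le]
    rw [hx₀, h3, h1]
    abel
  have hIcc_mem : Icc (0:ℝ) 1 ∈ 𝓝[>] (0:ℝ) :=
    mem_of_superset (Ioc_mem_nhdsGT_of_mem ⟨le_refl 0, one_pos⟩) Ioc_subset_Icc_self
  have hFt : Tendsto F (𝓝[>] (0:ℝ)) (𝓝 0) := by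
    have h0 : F 0 = 0 := by simp [hFdef]
    have h1 := (hFcont 0 (left_mem_Icc.2 zero_le_one)).tendsto
    rw [h0] at h1
    exact h1.mono_left (nhdsWithin_le_of_mem hIcc_mem)
  have hlim : Tendsto u (𝓝[>] (0:ℝ)) (𝓝 x₀) := by
    have h1 : Tendsto (fun t => x₀ + F t) (𝓝[>] (0:ℝ)) (𝓝 (x₀ + 0)) :=
      tendsto_const_nhds.add hFt
    rw [add_zero] at h1
    refine h1.congr' ?_
    filter_upwards [Ioo_mem_nhdsGT one_pos] with t ht
    exact (key t ht).symm
  refine ⟨⟨x₀, hlim⟩, ⟨fun t => if 0 < t then u t else x₀, ?_, fun t ht => if_pos ht⟩⟩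
  intro t ht
  rcases eq_or_lt_of_le (mem_Ici.1 ht) with h0 | h0
  · -- t = 0
    subst h0
    have hv0 : (if (0:ℝ) < 0 then u 0 else x₀) = x₀ := if_neg (lt_irrefl 0)
    rw [ContinuousWithinAt, hv0]
    have hsplit : (𝓝[Ici (0:ℝ)] 0) = 𝓝[Ioi (0:ℝ)] 0 ⊔ 𝓝[{(0:ℝ)}] 0 := by
      rw [← nhdsWithin_union, Ioi_union_left]
    rw [hsplit, tendsto_sup]
    constructor
    · refine hlim.congr' ?_
      filter_upwards [self_mem_nhdsWithin] with x hx
      exact (if_pos hx).symm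
    · rw [nhdsWithin_singleton]
      have := tendsto_pure_nhds (fun t : ℝ => if 0 < t then u t else x₀) 0
      rwa [hv0] at this
  · -- t > 0
    have hvu : (fun s : ℝ => if 0 < s then u s else x₀) =ᶠ[𝓝 t] u := by
      filter_upwards [isOpen_Ioi.mem_nhds h0] with x hx
      exact if_pos hx
    exact ((hder t h0).continuousAt.congr hvu.symm).continuousWithinAt
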